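/- arXiv:math/0703259 — 4 statements merged into one kernel-verified Lean document; each statement's English description precedes it below -/
import Mathlib

section
/- Let d ≥ 2 be an integer and define w : ℝ → ℝ by w(t) = −t^d·(1 + d·t). Then there exist constants t₁ > 0 and A > 0 such that (L_t w)(t) > A·t^(d+1) for all t with 0 < t < t₁. -/
lemma sinh_le_mul_cosh' {x : ℝ} (hx : 0 ≤ x) : Real.sinh x ≤ x * Real.cosh x := by
  have hmono : MonotoneOn (fun y : ℝ => y * Real.cosh y - Real.sinh y) (Set.Ici 0) := by
    apply monotoneOn_of_deriv_nonneg (convex_Ici 0)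
    · exact ((continuous_id.mul Real.continuous_cosh).sub Real.continuous_sinh).continuousOn
    · intro y _
      exact (((hasDerivAt_id y).mul (Real.hasDerivAt_cosh y)).sub
        (Real.hasDerivAt_sinh y)).differentiableAt.differentiableWithinAt
    · intro y hy
      rw [interior_Ici, Set.mem_Ioi] at hy
      have hDer : HasDerivAt (fun y : ℝ => y * Real.cosh y - Real.sinh y) (y * Real.sinh y) y := by
        have := ((hasDerivAt_id y).mul (Real.hasDerivAt_cosh y)).sub (Real.hasDerivAt_sinh y)
        refine this.congr_deriv ?_
        simp [id]
      rw [hDer.deriv]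
      exact mul_nonneg hy.le (Real.sinh_nonneg_iff.mpr hy.le)
  have h0 : (0:ℝ) ∈ Set.Ici (0:ℝ) := Set.self_mem_Ici
  have := hmono h0 (Set.mem_Ici.mpr hx) hx
  simp only [Real.sinh_zero, Real.cosh_zero, mul_one, zero_mul, sub_zero, zero_sub, neg_zero] at this
  linarith

lemma cosh_lt_two' {x : ℝ} (hx : |x| ≤ 1/2) : Real.cosh x < 2 := by
  have h1 : Real.cosh x ≤ Real.cosh (1/2) :=
    Real.cosh_le_cosh.mpr (by rw [abs_of_pos (by norm_num : (0:ℝ) < 1/2)]; exact hx)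
  have h2 : Real.exp (1/2 : ℝ) < 2 := by
    have hsq : Real.exp (1/2 : ℝ) ^ 2 = Real.exp 1 := by
      rw [← Real.exp_nat_mul]; norm_num
    nlinarith [Real.exp_one_lt_d9, Real.exp_pos (1/2 : ℝ)]
  have h3 : Real.cosh (1/2 : ℝ) < 2 := by
    rw [Real.cosh_eq]
    have : Real.exp (-(1/2) : ℝ) ≤ 1 := by
      rw [Real.exp_le_one_iff]; norm_num
    linarith
  linarith

set_option maxHeartbeats 1000000 in
/-- Supersolution estimate (Lemma `lem:Lt-est`): for `w(t) = −t^d(1+dt)` there are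
`t₁, A > 0` with `(L_t w)(t) > A·t^(d+1)` for `0 < t < t₁`, where
`(L_t u)(t) = −sinh²(t)·u''(t) + (d−2)·sinh(t)·cosh(t)·u'(t) + d·u(t)`. -/
theorem stmt_3 (d : ℕ) (hd : 2 ≤ d) :
    ∃ t₁ A : ℝ, 0 < t₁ ∧ 0 < A ∧
      ∀ t : ℝ, 0 < t → t < t₁ →
        A * t ^ (d + 1) <
          -Real.sinh t ^ 2 * deriv (deriv (fun s : ℝ => -(s ^ d * (1 + d * s)))) t
            + ((d : ℝ) - 2) * Real.sinh t * Real.cosh t *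
                deriv (fun s : ℝ => -(s ^ d * (1 + d * s))) t
            + d * (-(t ^ d * (1 + d * t))) := by
  have hD2 : (2:ℝ) ≤ (d:ℝ) := by exact_mod_cast hd
  have hDpos : (0:ℝ) < (d:ℝ) := by linarith
  refine ⟨min (1/2) (((d:ℝ)+1)/(4*(d:ℝ)*((d:ℝ)+2))), (d:ℝ), ?_, hDpos, ?_⟩
  · refine lt_min (by norm_num) ?_
    exact div_pos (by linarith) (mul_pos (mul_pos (by norm_num) hDpos) (by linarith))
  intro t ht ht1
  have ht12 : t < 1/2 := lt_of_lt_of_le ht1 (min_le_left _ _)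
  have htD' : t < ((d:ℝ)+1)/(4*(d:ℝ)*((d:ℝ)+2)) := lt_of_lt_of_le ht1 (min_le_right _ _)
  have htD : 4*(d:ℝ)*((d:ℝ)+2)*t < (d:ℝ)+1 := by
    rw [lt_div_iff₀ (mul_pos (mul_pos (by norm_num : (0:ℝ)<4) hDpos)
      (by linarith : (0:ℝ) < (d:ℝ)+2))] at htD'
    linarith [htD']
  -- derivatives
  have hfun : (fun s : ℝ => -(s ^ d * (1 + d * s))) = fun s : ℝ => -s^d - (d:ℝ) * s^(d+1) := by
    funext s; push_cast; ring
  have hderiv1 : deriv (fun s : ℝ => -(s ^ d * (1 + d * s)))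
      = fun s : ℝ => -((d:ℝ) * s^(d-1)) - (d:ℝ)*(((d:ℝ)+1) * s^d) := by
    rw [hfun]
    funext s
    have h1 : HasDerivAt (fun s : ℝ => -s^d - (d:ℝ) * s^(d+1))
        (-((d:ℝ) * s^(d-1)) - (d:ℝ)*(((d:ℝ)+1) * s^d)) s := by
      have := (hasDerivAt_pow d s).neg.sub ((hasDerivAt_pow (d+1) s).const_mul (d:ℝ))
      refine this.congr_deriv ?_
      push_cast
      simp
    exact h1.deriv
  have hderiv2 : deriv (deriv (fun s : ℝ => -(s ^ d * (1 + d * s)))) t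
      = -((d:ℝ) * (((d:ℝ)-1) * t^(d-2))) - (d:ℝ)*(((d:ℝ)+1) * ((d:ℝ) * t^(d-1))) := by
    rw [hderiv1]
    have h2 : HasDerivAt (fun s : ℝ => -((d:ℝ) * s^(d-1)) - (d:ℝ)*(((d:ℝ)+1) * s^d))
        (-((d:ℝ) * (((d:ℝ)-1) * t^(d-2))) - (d:ℝ)*(((d:ℝ)+1) * ((d:ℝ) * t^(d-1)))) t := by
      have := (((hasDerivAt_pow (d-1) t).const_mul (d:ℝ)).neg).sub
        (((hasDerivAt_pow d t).const_mul ((d:ℝ)+1)).const_mul (d:ℝ))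
      refine this.congr_deriv ?_
      rw [Nat.cast_sub (by omega : 1 ≤ d)]
      norm_num [Nat.sub_sub]
    exact h2.deriv
  rw [hderiv2, hderiv1]
  beta_reduce
  -- hyperbolic estimates
  set S := Real.sinh t with hS
  set C := Real.cosh t with hC
  have hSpos : 0 < S := Real.sinh_pos_iff.mpr ht
  have hC1 : 1 ≤ C := Real.one_le_cosh t
  have htS : t ≤ S := Real.self_le_sinh_iff.mpr ht.le
  have hC2 : C < 2 := cosh_lt_two' (by rw [abs_of_pos ht]; linarith)
  have hStC : S ≤ t * C := sinh_le_mul_cosh' ht.le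
  have hCsq : C^2 = 1 + S^2 := by rw [hS, hC]; exact Real.cosh_sq' t
  clear_value S C
  have hS2t : S ≤ 2*t := by nlinarith [mul_lt_mul_of_pos_left hC2 ht]
  have hSC : S * C ≤ t + 4*t^3 := by
    have h1 : S * C ≤ (t*C) * C := by nlinarith
    have h3 : C^2 ≤ 1 + 4*t^2 := by
      rw [hCsq]
      nlinarith [hSpos.le]
    nlinarith [ht.le, mul_le_mul_of_nonneg_left h3 ht.le]
  have hS2 : t^2 ≤ S^2 := by nlinarith
  -- power rewrites
  have e1 : t^(d+1) = t^(d-2) * t^3 := by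
    rw [← pow_add]; congr 1; omega
  have e2 : t^d = t^(d-2) * t^2 := by
    rw [← pow_add]; congr 1; omega
  have e3 : t^(d-1) = t^(d-2) * t := by
    rw [← pow_succ]; congr 1; omega
  rw [e1, e2, e3]
  set p : ℝ := t^(d-2) with hp
  have hppos : 0 < p := by rw [hp]; exact pow_pos ht _
  clear_value p
  -- key bracket inequality
  have key : (d:ℝ) * t^3 <
      S^2 * ((d:ℝ)*((d:ℝ)-1) + (d:ℝ)*((d:ℝ)+1)*(d:ℝ)*t)
        - ((d:ℝ)-2)*S*C*((d:ℝ)*t + (d:ℝ)*((d:ℝ)+1)*t^2)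
        - (d:ℝ)*t^2 - (d:ℝ)*(d:ℝ)*t^3 := by
    set D : ℝ := (d:ℝ) with hDdef
    clear_value D
    have hBpos : 0 ≤ D*(D-1) + D*(D+1)*D*t := by
      nlinarith [mul_nonneg hDpos.le (by linarith : (0:ℝ) ≤ D-1),
        mul_nonneg (mul_nonneg (mul_nonneg hDpos.le (by linarith : (0:ℝ) ≤ D+1)) hDpos.le) ht.le]
    have hGpos : 0 ≤ D*t + D*(D+1)*t^2 := by
      nlinarith [mul_nonneg hDpos.le ht.le,
        mul_nonneg (mul_nonneg hDpos.le (by linarith : (0:ℝ) ≤ D+1)) (sq_nonneg t)]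
    have ha : t^2 * (D*(D-1) + D*(D+1)*D*t) ≤ S^2 * (D*(D-1) + D*(D+1)*D*t) :=
      mul_le_mul_of_nonneg_right hS2 hBpos
    have hb : (D-2)*(S*C)*(D*t + D*(D+1)*t^2) ≤ (D-2)*(t+4*t^3)*(D*t + D*(D+1)*t^2) := by
      apply mul_le_mul_of_nonneg_right _ hGpos
      apply mul_le_mul_of_nonneg_left hSC (by linarith)
    have ht2' : t^2 ≤ t/2 := by nlinarith
    have hK : (0:ℝ) ≤ 4*(D+1)*(D-2) := by nlinarith
    have hbr : 4*(D-2)*t + 4*(D+1)*(D-2)*t^2 < D+1 := by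
      have hc1 : 4*(D+1)*(D-2)*t^2 ≤ 2*(D+1)*(D-2)*t := by
        nlinarith [mul_le_mul_of_nonneg_left ht2' hK]
      have hc2 : 4*(D-2)*t + 2*(D+1)*(D-2)*t ≤ 4*D*(D+2)*t := by
        nlinarith [mul_nonneg (by nlinarith : (0:ℝ) ≤ 2*D*D + 6*D + 12) ht.le]
      linarith
    have hpos3 : 0 < D * t^3 * ((D+1) - (4*(D-2)*t + 4*(D+1)*(D-2)*t^2)) :=
      mul_pos (mul_pos hDpos (pow_pos ht 3)) (by linarith)
    have hpoly : D * t^3 <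
        t^2 * (D*(D-1) + D*(D+1)*D*t) - (D-2)*(t+4*t^3)*(D*t + D*(D+1)*t^2)
          - D*t^2 - D*D*t^3 := by nlinarith [hpos3]
    nlinarith [ha, hb, hpoly]
  have hmul := (mul_lt_mul_iff_right₀ hppos).mpr key
  have heq : p * (S^2 * ((d:ℝ)*((d:ℝ)-1) + (d:ℝ)*((d:ℝ)+1)*(d:ℝ)*t)
        - ((d:ℝ)-2)*S*C*((d:ℝ)*t + (d:ℝ)*((d:ℝ)+1)*t^2)
        - (d:ℝ)*t^2 - (d:ℝ)*(d:ℝ)*t^3)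
      = -S^2 * (-((d:ℝ)*(((d:ℝ)-1)*p)) - (d:ℝ)*(((d:ℝ)+1)*((d:ℝ)*(p*t))))
        + ((d:ℝ)-2)*S*C*(-((d:ℝ)*(p*t)) - (d:ℝ)*(((d:ℝ)+1)*(p*t^2)))
        + (d:ℝ) * -(p*t^2*(1+(d:ℝ)*t)) := by ring
  have heq2 : p * ((d:ℝ) * t^3) = (d:ℝ) * (p*t^3) := by ring
  linarith [heq ▸ heq2 ▸ hmul]
end

section
/- Let d ≥ 2 be an integer and define w : ℝ → ℝ by w(t) = −t^d·(1 + d·t). Then there exist constants C > 0 and δ > 0 such that |(L_t w)(t) − d(d+2)·t^(d+1)| ≤ C·t^(d+2) for all t with 0 < t < δ. -/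
open Real Finset

lemma exp_close (t : ℝ) (h1 : |t| ≤ 1) :
    |Real.exp t - (1 + t + t^2/2)| ≤ |t|^3 := by
  have h := Real.exp_bound h1 (n := 3) (by norm_num)
  have hs : ∑ m ∈ range 3, t ^ m / m.factorial = 1 + t + t^2/2 := by
    simp [Finset.sum_range_succ, Nat.factorial]
  rw [hs] at h
  calc |Real.exp t - (1 + t + t^2/2)| ≤ |t|^3 * ((3:ℕ).succ/((3:ℕ).factorial * 3)) := h
    _ ≤ |t|^3 := by
        have : ((3:ℕ).succ/(((3:ℕ).factorial : ℝ) * 3)) = 4/18 := by norm_num [Nat.factorial]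
        rw [this]; nlinarith [pow_nonneg (abs_nonneg t) 3]

lemma sinh_close (t : ℝ) (h0 : 0 ≤ t) (h1 : t ≤ 1) : |Real.sinh t - t| ≤ t^3 := by
  have ha : |t| ≤ 1 := by rwa [abs_of_nonneg h0]
  have hb : |(-t)| ≤ 1 := by rwa [abs_neg, abs_of_nonneg h0]
  have e1 := exp_close t ha
  have e2 := exp_close (-t) hb
  rw [abs_of_nonneg h0] at e1
  rw [abs_neg, abs_of_nonneg h0] at e2
  rw [Real.sinh_eq]
  have key : (Real.exp t - Real.exp (-t)) / 2 - t
      = ((Real.exp t - (1 + t + t^2/2)) - (Real.exp (-t) - (1 + (-t) + (-t)^2/2))) / 2 := by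
    ring
  rw [key]
  have h3 := abs_sub (Real.exp t - (1 + t + t^2/2)) (Real.exp (-t) - (1 + (-t) + (-t)^2/2))
  rw [abs_div, abs_two]
  linarith

lemma cosh_close (t : ℝ) (h0 : 0 ≤ t) (h1 : t ≤ 1) : |Real.cosh t - 1| ≤ 2*t^2 := by
  have ha : |t| ≤ 1 := by rwa [abs_of_nonneg h0]
  have hb : |(-t)| ≤ 1 := by rwa [abs_neg, abs_of_nonneg h0]
  have e1 := exp_close t ha
  have e2 := exp_close (-t) hb
  rw [abs_of_nonneg h0] at e1
  rw [abs_neg, abs_of_nonneg h0] at e2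
  rw [Real.cosh_eq]
  have key : (Real.exp t + Real.exp (-t)) / 2 - 1
      = ((Real.exp t - (1 + t + t^2/2)) + (Real.exp (-t) - (1 + (-t) + (-t)^2/2))) / 2 + t^2/2 := by
    ring
  rw [key]
  have h3 := abs_add_le (Real.exp t - (1 + t + t^2/2)) (Real.exp (-t) - (1 + (-t) + (-t)^2/2))
  have h4 : |((Real.exp t - (1 + t + t^2/2)) + (Real.exp (-t) - (1 + (-t) + (-t)^2/2))) / 2 + t^2/2|
      ≤ |((Real.exp t - (1 + t + t^2/2)) + (Real.exp (-t) - (1 + (-t) + (-t)^2/2)))| / 2 + t^2/2 := by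
    have := abs_add_le (((Real.exp t - (1 + t + t^2/2)) + (Real.exp (-t) - (1 + (-t) + (-t)^2/2))) / 2) (t^2/2)
    rw [abs_div, abs_two] at this
    have ht2 : |t^2/2| = t^2/2 := abs_of_nonneg (by positivity)
    linarith [this, ht2.le]
  have ht3 : t^3 ≤ t^2 := by nlinarith
  calc _ ≤ _ := h4
    _ ≤ (t^3 + t^3)/2 + t^2/2 := by linarith
    _ ≤ 2*t^2 := by nlinarith

lemma bound_aux (e : ℕ) (t E1 E2 : ℝ) (ht0 : 0 < t) (ht1 : t ≤ 1)
    (hE1 : |E1| ≤ 3*t^4) (hE2 : |E2| ≤ 5*t^3) :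
    |E1 * (((e:ℝ)+2)*((e:ℝ)+1) * t^e + ((e:ℝ)+2)*((e:ℝ)+3)*((e:ℝ)+2) * t^(e+1))
      + E2 * (-((e:ℝ)*(((e:ℝ)+2) * t^(e+1) + ((e:ℝ)+2)*((e:ℝ)+3) * t^(e+2))))|
    ≤ (3*((((e:ℝ)+2)*((e:ℝ)+1) + ((e:ℝ)+2)*((e:ℝ)+3)*((e:ℝ)+2)))
        + 5*((e:ℝ)*(((e:ℝ)+2) + ((e:ℝ)+2)*((e:ℝ)+3))) + 1) * t^(e+2+2) := by
  have hE0 : (0:ℝ) ≤ (e:ℝ) := Nat.cast_nonneg e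
  have h1 : t^(e+1) ≤ t^e := by
    rw [pow_succ]
    nlinarith [pow_nonneg ht0.le e]
  have h2 : t^(e+2) ≤ t^(e+1) := by
    rw [pow_succ]
    nlinarith [pow_nonneg ht0.le (e+1)]
  have hp1 : (0:ℝ) ≤ t^(e+1) := by positivity
  have hp2 : (0:ℝ) ≤ t^(e+2) := by positivity
  have hte : (0:ℝ) ≤ t^e := by positivity
  have c1 : (0:ℝ) ≤ ((e:ℝ)+2)*((e:ℝ)+1) := by positivity
  have c2 : (0:ℝ) ≤ ((e:ℝ)+2)*((e:ℝ)+3)*((e:ℝ)+2) := by positivity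
  have c4 : (0:ℝ) ≤ (e:ℝ)*(((e:ℝ)+2)*((e:ℝ)+3)) := by positivity
  have hA : |((e:ℝ)+2)*((e:ℝ)+1) * t^e + ((e:ℝ)+2)*((e:ℝ)+3)*((e:ℝ)+2) * t^(e+1)|
      ≤ (((e:ℝ)+2)*((e:ℝ)+1) + ((e:ℝ)+2)*((e:ℝ)+3)*((e:ℝ)+2)) * t^e := by
    rw [abs_of_nonneg (add_nonneg (mul_nonneg c1 hte) (mul_nonneg c2 hp1))]
    nlinarith [mul_le_mul_of_nonneg_left h1 c2]
  have hB : |(-((e:ℝ)*(((e:ℝ)+2) * t^(e+1) + ((e:ℝ)+2)*((e:ℝ)+3) * t^(e+2))))|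
      ≤ (e:ℝ)*(((e:ℝ)+2) + ((e:ℝ)+2)*((e:ℝ)+3)) * t^(e+1) := by
    have hin : (0:ℝ) ≤ (e:ℝ)*(((e:ℝ)+2) * t^(e+1) + ((e:ℝ)+2)*((e:ℝ)+3) * t^(e+2)) :=
      mul_nonneg hE0 (add_nonneg (mul_nonneg (by linarith) hp1)
        (mul_nonneg (by positivity) hp2))
    rw [abs_neg, abs_of_nonneg hin]
    nlinarith [mul_le_mul_of_nonneg_left h2 c4]
  have hEA : |E1 * (((e:ℝ)+2)*((e:ℝ)+1) * t^e + ((e:ℝ)+2)*((e:ℝ)+3)*((e:ℝ)+2) * t^(e+1))|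
      ≤ 3*t^4 * (((((e:ℝ)+2)*((e:ℝ)+1) + ((e:ℝ)+2)*((e:ℝ)+3)*((e:ℝ)+2))) * t^e) := by
    rw [abs_mul]
    exact mul_le_mul hE1 hA (abs_nonneg _) (by positivity)
  have hEB : |E2 * (-((e:ℝ)*(((e:ℝ)+2) * t^(e+1) + ((e:ℝ)+2)*((e:ℝ)+3) * t^(e+2))))|
      ≤ 5*t^3 * ((e:ℝ)*(((e:ℝ)+2) + ((e:ℝ)+2)*((e:ℝ)+3)) * t^(e+1)) := by
    rw [abs_mul]
    exact mul_le_mul hE2 hB (abs_nonneg _) (by positivity)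
  have heq1 : 3*t^4 * (((((e:ℝ)+2)*((e:ℝ)+1) + ((e:ℝ)+2)*((e:ℝ)+3)*((e:ℝ)+2))) * t^e)
      = 3*((((e:ℝ)+2)*((e:ℝ)+1) + ((e:ℝ)+2)*((e:ℝ)+3)*((e:ℝ)+2))) * t^(e+2+2) := by ring
  have heq2 : 5*t^3 * ((e:ℝ)*(((e:ℝ)+2) + ((e:ℝ)+2)*((e:ℝ)+3)) * t^(e+1))
      = 5*((e:ℝ)*(((e:ℝ)+2) + ((e:ℝ)+2)*((e:ℝ)+3))) * t^(e+2+2) := by ring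
  have hT : (0:ℝ) ≤ t^(e+2+2) := by positivity
  calc |E1 * (((e:ℝ)+2)*((e:ℝ)+1) * t^e + ((e:ℝ)+2)*((e:ℝ)+3)*((e:ℝ)+2) * t^(e+1))
        + E2 * (-((e:ℝ)*(((e:ℝ)+2) * t^(e+1) + ((e:ℝ)+2)*((e:ℝ)+3) * t^(e+2))))|
      ≤ 3*t^4 * (((((e:ℝ)+2)*((e:ℝ)+1) + ((e:ℝ)+2)*((e:ℝ)+3)*((e:ℝ)+2))) * t^e)
        + 5*t^3 * ((e:ℝ)*(((e:ℝ)+2) + ((e:ℝ)+2)*((e:ℝ)+3)) * t^(e+1)) :=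
        (abs_add_le _ _).trans (by linarith)
    _ ≤ _ := by rw [heq1, heq2]; linarith

set_option maxHeartbeats 1000000 in
/-- Expansion `L_t(w) = d(d+2)t^(d+1) + O(t^(d+2))` for `w(t) = −t^d(1+dt)`, where
`(L_t u)(t) = −sinh²(t)·u''(t) + (d−2)·sinh(t)·cosh(t)·u'(t) + d·u(t)`. -/
theorem stmt_4 (d : ℕ) (hd : 2 ≤ d) :
    ∃ C δ : ℝ, 0 < C ∧ 0 < δ ∧
      ∀ t : ℝ, 0 < t → t < δ →
        |(-Real.sinh t ^ 2 * deriv (deriv (fun s : ℝ => -(s ^ d * (1 + d * s)))) t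
            + ((d : ℝ) - 2) * Real.sinh t * Real.cosh t *
                deriv (fun s : ℝ => -(s ^ d * (1 + d * s))) t
            + d * (-(t ^ d * (1 + d * t))))
          - d * (d + 2) * t ^ (d + 1)| ≤ C * t ^ (d + 2) := by
  obtain ⟨e, rfl⟩ : ∃ e, d = e + 2 := ⟨d - 2, by omega⟩
  -- first derivative
  have hderiv1 : ∀ x : ℝ, HasDerivAt (fun s : ℝ => -(s ^ (e+2) * (1 + ((e+2:ℕ):ℝ) * s)))
      (-(((e:ℝ)+2) * x^(e+1) + ((e:ℝ)+2)*((e:ℝ)+3) * x^(e+2))) x := by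
    intro x
    have h := ((hasDerivAt_pow (e+2) x).fun_mul
      ((hasDerivAt_const x (1:ℝ)).fun_add ((hasDerivAt_id x).const_mul ((e+2:ℕ):ℝ)))).fun_neg
    refine h.congr_deriv ?_
    simp only [Nat.add_sub_cancel, id_eq]
    push_cast
    ring
  have hdf : deriv (fun s : ℝ => -(s ^ (e+2) * (1 + ((e+2:ℕ):ℝ) * s)))
      = fun x : ℝ => -(((e:ℝ)+2) * x^(e+1) + ((e:ℝ)+2)*((e:ℝ)+3) * x^(e+2)) :=
    funext fun x => (hderiv1 x).deriv
  have hderiv2 : ∀ x : ℝ, HasDerivAt (fun x : ℝ => -(((e:ℝ)+2) * x^(e+1) + ((e:ℝ)+2)*((e:ℝ)+3) * x^(e+2)))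
      (-(((e:ℝ)+2)*((e:ℝ)+1) * x^e + ((e:ℝ)+2)*((e:ℝ)+3)*((e:ℝ)+2) * x^(e+1))) x := by
    intro x
    have h := (((hasDerivAt_pow (e+1) x).const_mul ((e:ℝ)+2)).fun_add
      ((hasDerivAt_pow (e+2) x).const_mul (((e:ℝ)+2)*((e:ℝ)+3)))).fun_neg
    refine h.congr_deriv ?_
    simp only [Nat.add_sub_cancel]
    push_cast
    ring
  refine ⟨3*(((e:ℝ)+2)*((e:ℝ)+1) + ((e:ℝ)+2)*((e:ℝ)+3)*((e:ℝ)+2)) + 5*((e:ℝ)*(((e:ℝ)+2) + ((e:ℝ)+2)*((e:ℝ)+3))) + 1, 1,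
    by positivity, one_pos, ?_⟩
  intro t ht0 ht1'
  have ht1 : t ≤ 1 := le_of_lt ht1'
  rw [hdf, (hderiv2 t).deriv]
  beta_reduce
  -- error terms
  set a : ℝ := Real.sinh t - t with ha_def
  set b : ℝ := Real.cosh t - 1 with hb_def
  have ha : |a| ≤ t^3 := sinh_close t ht0.le ht1
  have hb : |b| ≤ 2*t^2 := cosh_close t ht0.le ht1
  set E1 : ℝ := Real.sinh t ^ 2 - t^2 with hE1_def
  set E2 : ℝ := Real.sinh t * Real.cosh t - t with hE2_def
  have hsinh_nonneg : 0 ≤ Real.sinh t := by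
    rw [← Real.sinh_zero]; exact Real.sinh_le_sinh.2 ht0.le
  have hsinh_le : Real.sinh t ≤ t + t^3 := by
    have := (abs_le.1 ha).2; linarith [ha_def]
  have hE1 : |E1| ≤ 3*t^4 := by
    have h1 : E1 = a * (Real.sinh t + t) := by rw [hE1_def, ha_def]; ring
    rw [h1, abs_mul]
    have h2 : |Real.sinh t + t| ≤ 3*t := by
      rw [abs_of_nonneg (by linarith)]
      nlinarith
    calc |a| * |Real.sinh t + t| ≤ t^3 * (3*t) :=
          mul_le_mul ha h2 (abs_nonneg _) (by positivity)
      _ = 3*t^4 := by ring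
  have hE2 : |E2| ≤ 5*t^3 := by
    have h1 : E2 = t*b + a + a*b := by rw [hE2_def, ha_def, hb_def]; ring
    rw [h1]
    have h2 : |t*b + a + a*b| ≤ |t*b| + |a| + |a*b| :=
      (abs_add_le _ _).trans (by linarith [abs_add_le (t*b) a])
    have h3 : |t*b| ≤ 2*t^3 := by
      rw [abs_mul, abs_of_nonneg ht0.le]
      calc t * |b| ≤ t * (2*t^2) := by nlinarith [abs_nonneg b]
        _ = 2*t^3 := by ring
    have h4 : |a*b| ≤ 2*t^3 := by
      rw [abs_mul]
      calc |a| * |b| ≤ t^3 * (2*t^2) := mul_le_mul ha hb (abs_nonneg _) (by positivity)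
        _ = 2*t^5 := by ring
        _ ≤ 2*t^3 := by
            have := pow_le_pow_of_le_one ht0.le ht1 (by norm_num : 3 ≤ 5)
            linarith
    have h5 : |a| ≤ t^3 := ha
    linarith
  -- algebraic identity
  have key : (-Real.sinh t ^ 2 * -(((e:ℝ)+2)*((e:ℝ)+1) * t^e + ((e:ℝ)+2)*((e:ℝ)+3)*((e:ℝ)+2) * t^(e+1))
        + ((((e:ℕ)+2:ℕ):ℝ) - 2) * Real.sinh t * Real.cosh t *
            -(((e:ℝ)+2) * t^(e+1) + ((e:ℝ)+2)*((e:ℝ)+3) * t^(e+2))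
        + (((e:ℕ)+2:ℕ):ℝ) * (-(t ^ (e+2) * (1 + (((e:ℕ)+2:ℕ):ℝ) * t))))
      - (((e:ℕ)+2:ℕ):ℝ) * ((((e:ℕ)+2:ℕ):ℝ) + 2) * t ^ (e + 2 + 1)
      = E1 * (((e:ℝ)+2)*((e:ℝ)+1) * t^e + ((e:ℝ)+2)*((e:ℝ)+3)*((e:ℝ)+2) * t^(e+1))
        + E2 * (-((e:ℝ)*(((e:ℝ)+2) * t^(e+1) + ((e:ℝ)+2)*((e:ℝ)+3) * t^(e+2)))) := by
    rw [hE1_def, hE2_def]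
    push_cast
    ring
  push_cast at key ⊢
  rw [key]
  exact bound_aux e t E1 E2 ht0 ht1 hE1 hE2
end

section
/- Let R₁ > 0 and λ ≥ 1 be real numbers. Let η₁, η₂ : ℝ → ℝ be continuously differentiable functions with η₁'(r) ≤ η₂'(r) for all r ∈ [R₁, 6λR₁]. Let γ : ℝ → ℝ be a continuous nonnegative function vanishing outside [R₁, 6λR₁] with ∫_{R₁}^{6λR₁} γ(t) dt > 0 and ∫_{R₁}^{6λR₁} γ(t)·(η₁(t) − η₂(t)) dt = 0. Define m = −1 / (∫_{R₁}^{6λR₁} γ(t) dt), β(r) = 1 + m·∫_{R₁}^{r} γ(t) dt, and η(r) = η₁(R₁) + ∫_{R₁}^{r} [β(t)·η₁'(t) + (1 − β(t))·η₂'(t)] dt. Then: η(r) = η₁(r) for all r ≤ R₁; η(r) = η₂(r) for all r ≥ 6λR₁; and η'(r) ≤ η₂'(r) for all r ≥ R₁. -/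
open MeasureTheory intervalIntegral

/-- Properties of the interpolating function `η` that rounds the corner between
`η₁` and `η₂`: `η = η₁` for `r ≤ R₁`, `η = η₂` for `r ≥ 6λR₁`, and `η' ≤ η₂'`
for `r ≥ R₁`. -/
theorem stmt_6 (R₁ lam : ℝ) (hR₁ : 0 < R₁) (hlam : 1 ≤ lam)
    (η₁ η₂ : ℝ → ℝ) (hη₁ : ContDiff ℝ 1 η₁) (hη₂ : ContDiff ℝ 1 η₂)
    (hder : ∀ r ∈ Set.Icc R₁ (6 * lam * R₁), deriv η₁ r ≤ deriv η₂ r)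
    (γ : ℝ → ℝ) (hγc : Continuous γ) (hγ0 : ∀ r, 0 ≤ γ r)
    (hγsupp : ∀ r, r ∉ Set.Icc R₁ (6 * lam * R₁) → γ r = 0)
    (hγint : 0 < ∫ t in R₁..(6 * lam * R₁), γ t)
    (hγorth : (∫ t in R₁..(6 * lam * R₁), γ t * (η₁ t - η₂ t)) = 0)
    (m : ℝ) (hm : m = -1 / ∫ t in R₁..(6 * lam * R₁), γ t)
    (β : ℝ → ℝ) (hβ : ∀ r, β r = 1 + m * ∫ t in R₁..r, γ t)
    (η : ℝ → ℝ)
    (hη : ∀ r, η r = η₁ R₁ + ∫ t in R₁..r, (β t * deriv η₁ t + (1 - β t) * deriv η₂ t)) :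
    (∀ r ≤ R₁, η r = η₁ r) ∧ (∀ r, 6 * lam * R₁ ≤ r → η r = η₂ r) ∧
      ∀ r, R₁ ≤ r → deriv η r ≤ deriv η₂ r := by
  set R₂ := 6 * lam * R₁ with hR₂def
  have hR₁₂ : R₁ ≤ R₂ := by nlinarith
  have hd₁ : Differentiable ℝ η₁ := hη₁.differentiable one_ne_zero
  have hd₂ : Differentiable ℝ η₂ := hη₂.differentiable one_ne_zero
  have hcd₁ : Continuous (deriv η₁) := hη₁.continuous_deriv le_rfl
  have hcd₂ : Continuous (deriv η₂) := hη₂.continuous_deriv le_rfl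
  set I : ℝ := ∫ t in R₁..R₂, γ t with hIdef
  have hIne : I ≠ 0 := ne_of_gt hγint
  have hmI : m * I = -1 := by rw [hm]; field_simp
  have hae : ∀ c : ℝ, ∀ᵐ x : ℝ, x ≠ c := by
    intro c
    rw [MeasureTheory.ae_iff]
    simp only [not_not]
    simp [measure_singleton (α := ℝ) c]
  have hγi : ∀ a b : ℝ, IntervalIntegrable γ volume a b :=
    fun a b => hγc.intervalIntegrable a b
  -- the primitive of γ
  set Φ : ℝ → ℝ := fun r => ∫ t in R₁..r, γ t with hΦdef
  have hΦd : ∀ r : ℝ, HasDerivAt Φ (γ r) r := fun r =>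
    (hγc.integral_hasStrictDerivAt R₁ r).hasDerivAt
  -- Φ vanishes left of R₁
  have hΦ0 : ∀ r ≤ R₁, Φ r = 0 := by
    intro r hr
    have : (∫ t in r..R₁, γ t) = ∫ t in r..R₁, (0 : ℝ) := by
      apply intervalIntegral.integral_congr_ae
      filter_upwards [hae R₁] with x hx hmem
      rw [Set.uIoc_of_le hr] at hmem
      exact hγsupp x (fun hc => hx (le_antisymm hmem.2 hc.1))
    have h0 : (∫ t in r..R₁, γ t) = 0 := by rw [this]; simp
    show (∫ t in R₁..r, γ t) = 0
    rw [intervalIntegral.integral_symm, h0, neg_zero]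
  -- Φ is constant right of R₂
  have hΦI : ∀ r, R₂ ≤ r → Φ r = I := by
    intro r hr
    have hz : (∫ t in R₂..r, γ t) = ∫ t in R₂..r, (0 : ℝ) := by
      apply intervalIntegral.integral_congr_ae
      filter_upwards [hae R₂] with x hx hmem
      rw [Set.uIoc_of_le hr] at hmem
      exact hγsupp x (fun hc => hx (le_antisymm hc.2 (le_of_lt hmem.1)))
    have hsplit := intervalIntegral.integral_add_adjacent_intervals
      (hγi R₁ R₂) (hγi R₂ r)
    simp only [hΦdef]
    rw [← hsplit, ← hIdef, hz]
    simp
  have hΦnonneg : ∀ r, R₁ ≤ r → 0 ≤ Φ r := fun r hr =>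
    intervalIntegral.integral_nonneg hr (fun x _ => hγ0 x)
  have hΦle : ∀ r, R₁ ≤ r → r ≤ R₂ → Φ r ≤ I := by
    intro r hr hr2
    have hsplit := intervalIntegral.integral_add_adjacent_intervals
      (hγi R₁ r) (hγi r R₂)
    have h2 : 0 ≤ ∫ t in r..R₂, γ t :=
      intervalIntegral.integral_nonneg hr2 (fun x _ => hγ0 x)
    simp only [hΦdef, hIdef]
    linarith [hsplit]
  have hβfun : β = fun r => 1 + m * Φ r := funext hβ
  have hβd : ∀ r : ℝ, HasDerivAt β (m * γ r) r := by
    intro r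
    rw [hβfun]
    exact ((hΦd r).const_mul m).const_add 1
  have hΦcont : Continuous Φ :=
    continuous_iff_continuousAt.2 fun x => (hΦd x).continuousAt
  have hβcont : Continuous β := by
    rw [hβfun]
    exact continuous_const.add (continuous_const.mul hΦcont)
  -- the integrand defining η
  set g : ℝ → ℝ := fun t => β t * deriv η₁ t + (1 - β t) * deriv η₂ t with hgdef
  have hgcont : Continuous g :=
    (hβcont.mul hcd₁).add ((continuous_const.sub hβcont).mul hcd₂)
  have hgi : ∀ a b : ℝ, IntervalIntegrable g volume a b :=
    fun a b => hgcont.intervalIntegrable a b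
  have hηfun : η = fun r => η₁ R₁ + ∫ t in R₁..r, g t := funext hη
  have hηd : ∀ r : ℝ, HasDerivAt η (g r) r := by
    intro r
    rw [hηfun]
    exact ((hgcont.integral_hasStrictDerivAt R₁ r).hasDerivAt).const_add _
  -- FTC2 for η₁ and η₂
  have hftc : ∀ (f : ℝ → ℝ), Differentiable ℝ f → Continuous (deriv f) →
      ∀ a b : ℝ, (∫ t in a..b, deriv f t) = f b - f a := by
    intro f hf hcf a b
    exact intervalIntegral.integral_deriv_eq_sub (fun x _ => hf x)
      (hcf.intervalIntegrable a b)
  -- β at the endpoints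
  have hβR₁ : β R₁ = 1 := by
    rw [hβ]; simp
  have hβR₂ : β R₂ = 0 := by
    rw [hβ, ← hIdef, hmI]; ring
  -- β vanishes right of R₂
  have hβ0 : ∀ r, R₂ ≤ r → β r = 0 := by
    intro r hr
    rw [hβfun]
    simp only
    rw [hΦI r hr, hmI]; ring
  -- part 1 : η = η₁ left of R₁
  have part1 : ∀ r ≤ R₁, η r = η₁ r := by
    intro r hr
    rw [hη r]
    have hcongr : (∫ t in R₁..r, g t) = ∫ t in R₁..r, deriv η₁ t := by
      apply intervalIntegral.integral_congr
      intro x hx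
      rw [Set.uIcc_of_ge hr] at hx
      have hx0 : (∫ t in R₁..x, γ t) = 0 := hΦ0 x hx.2
      have hβx : β x = 1 := by rw [hβ, hx0]; ring
      simp only [hgdef, hβx]; ring
    rw [hcongr, hftc η₁ hd₁ hcd₁]
    ring
  -- integration by parts identity
  have hparts : (∫ x in R₁..R₂, β x * (deriv η₁ x - deriv η₂ x))
      = η₂ R₁ - η₁ R₁ := by
    have h := intervalIntegral.integral_mul_deriv_eq_deriv_mul
      (u := β) (v := fun t => η₁ t - η₂ t) (u' := fun t => m * γ t)
      (v' := fun t => deriv η₁ t - deriv η₂ t) (a := R₁) (b := R₂)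
      (fun x _ => hβd x)
      (fun x _ => by
        have h1 := (hd₁ x).hasDerivAt
        have h2 := (hd₂ x).hasDerivAt
        exact h1.sub h2)
      ((continuous_const.mul hγc).intervalIntegrable _ _)
      ((hcd₁.sub hcd₂).intervalIntegrable _ _)
    have hlast : (∫ x in R₁..R₂, (m * γ x) * (η₁ x - η₂ x)) = 0 := by
      have : (∫ x in R₁..R₂, (m * γ x) * (η₁ x - η₂ x))
          = m * ∫ x in R₁..R₂, γ x * (η₁ x - η₂ x) := by
        rw [← intervalIntegral.integral_const_mul]
        congr 1; funext x; ring
      rw [this, hγorth, mul_zero]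
    rw [h, hlast, hβR₁, hβR₂]
    ring
  -- value of η at R₂
  have hηR₂ : η R₂ = η₂ R₂ := by
    rw [hη R₂]
    have hsplit : (∫ t in R₁..R₂, g t)
        = (∫ t in R₁..R₂, deriv η₂ t)
          + ∫ t in R₁..R₂, β t * (deriv η₁ t - deriv η₂ t) := by
      rw [← intervalIntegral.integral_add (g := fun t => β t * (deriv η₁ t - deriv η₂ t)) (hcd₂.intervalIntegrable _ _)
        ((hβcont.mul (hcd₁.sub hcd₂)).intervalIntegrable _ _)]
      apply intervalIntegral.integral_congr
      intro x _
      simp only [hgdef]; ring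
    rw [hsplit, hparts, hftc η₂ hd₂ hcd₂]
    ring
  -- part 2 : η = η₂ right of R₂
  have part2 : ∀ r, R₂ ≤ r → η r = η₂ r := by
    intro r hr
    have hsplit := intervalIntegral.integral_add_adjacent_intervals
      (hgi R₁ R₂) (hgi R₂ r)
    have htail : (∫ t in R₂..r, g t) = ∫ t in R₂..r, deriv η₂ t := by
      apply intervalIntegral.integral_congr
      intro x hx
      rw [Set.uIcc_of_le hr] at hx
      have hβx : β x = 0 := hβ0 x hx.1
      simp only [hgdef, hβx]; ring
    have h2 : η R₂ = η₁ R₁ + ∫ t in R₁..R₂, g t := hη R₂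
    rw [hη r, ← hsplit, htail, hftc η₂ hd₂ hcd₂]
    have : η₁ R₁ + (∫ t in R₁..R₂, g t) = η₂ R₂ := by rw [← h2, hηR₂]
    linarith
  refine ⟨part1, part2, ?_⟩
  -- part 3 : derivative comparison
  intro r hr
  have hderiv : deriv η r = g r := (hηd r).deriv
  rcases le_or_gt r R₂ with hr2 | hr2
  · have hβnn : 0 ≤ β r := by
      have h1 : (∫ t in R₁..r, γ t) ≤ I := hΦle r hr hr2
      have h2 : 0 ≤ ∫ t in R₁..r, γ t := hΦnonneg r hr
      rw [hβ, hm]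
      have hd : (∫ t in R₁..r, γ t) / I ≤ 1 := (div_le_one hγint).2 h1
      have he : -1 / I * ∫ t in R₁..r, γ t = -((∫ t in R₁..r, γ t) / I) := by
        ring
      rw [he]; linarith
    have hle : deriv η₁ r ≤ deriv η₂ r := hder r ⟨hr, hr2⟩
    rw [hderiv]
    simp only [hgdef]
    nlinarith
  · rw [hderiv]
    simp only [hgdef, hβ0 r (le_of_lt hr2)]
    simp
end

section
/- Let n ≥ 2 be an integer, let μ̲, μ̄ be reals with 0 < μ̲ ≤ μ̄, set λ = (μ̄/μ̲)^(1/(n+1)), and let C > 0. Then there exists R₁ > 0 such that the following holds: for every a ∈ (0,1) satisfying ((n+1)/n)·√(4/3)·μ̄/(4λR₁)^(n+1) < 1/a − 1 < ((n+1)/n)·√(3/4)·μ̲/(3λR₁)^(n+1), every constant m ∈ [μ̲, μ̄], and every continuously differentiable function A₁ : [R₁, 7λR₁] → ℝ with 0 ≤ A₁(r) ≤ C and −C/(n·r²) ≤ (d/dr)(A₁(r)/r) ≤ 0 for all r ∈ [R₁, 7λR₁], the functions η₁(r) = r^(n+1) + ((n+1)/n)·m − A₁(r)/r and η₂(r) =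 r^(n+1)/a satisfy: (i) η₁'(r) < η₂'(r) for all r ∈ [R₁, 7λR₁]; (ii) η₁(r) − η₂(r) > μ̲/20 for all r ∈ [R₁, 3λR₁]; (iii) η₂(r) − η₁(r) > μ̄/10 for all r ∈ [4λR₁, 7λR₁]. -/
set_option maxHeartbeats 1600000 in
/-- Lemma `lem:eta12est`: for `R₁` sufficiently large, with
`η₁(r) = r^(n+1) + ((n+1)/n)·m − A₁(r)/r` and `η₂(r) = r^(n+1)/a`, one has
`η₁' < η₂'` on `[R₁, 7λR₁]`, `η₁ − η₂ > μlo/20` on `[R₁, 3λR₁]`, and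
`η₂ − η₁ > μhi/10` on `[4λR₁, 7λR₁]`. -/
theorem stmt_7 (n : ℕ) (hn : 2 ≤ n) (μlo μhi : ℝ) (hμlo : 0 < μlo) (hle : μlo ≤ μhi)
    (lam : ℝ) (hlam : lam = (μhi / μlo) ^ ((1 : ℝ) / (n + 1)))
    (C : ℝ) (hC : 0 < C) :
    ∃ R₁ : ℝ, 0 < R₁ ∧
      ∀ a : ℝ, 0 < a → a < 1 →
        ((n + 1 : ℝ) / n) * Real.sqrt (4 / 3) * μhi / (4 * lam * R₁) ^ (n + 1) < 1 / a - 1 →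
        1 / a - 1 < ((n + 1 : ℝ) / n) * Real.sqrt (3 / 4) * μlo / (3 * lam * R₁) ^ (n + 1) →
        ∀ m : ℝ, μlo ≤ m → m ≤ μhi →
        ∀ A₁ : ℝ → ℝ,
          (∀ r ∈ Set.Icc R₁ (7 * lam * R₁), DifferentiableAt ℝ A₁ r) →
          (∀ r ∈ Set.Icc R₁ (7 * lam * R₁), 0 ≤ A₁ r ∧ A₁ r ≤ C) →
          (∀ r ∈ Set.Icc R₁ (7 * lam * R₁),
            -C / (n * r ^ 2) ≤ deriv (fun s => A₁ s / s) r ∧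
              deriv (fun s => A₁ s / s) r ≤ 0) →
          (∀ r ∈ Set.Icc R₁ (7 * lam * R₁),
            deriv (fun s : ℝ => s ^ (n + 1) + ((n + 1 : ℝ) / n) * m - A₁ s / s) r <
              deriv (fun s : ℝ => s ^ (n + 1) / a) r) ∧
          (∀ r ∈ Set.Icc R₁ (3 * lam * R₁),
            μlo / 20 < (r ^ (n + 1) + ((n + 1 : ℝ) / n) * m - A₁ r / r) - r ^ (n + 1) / a) ∧
          (∀ r ∈ Set.Icc (4 * lam * R₁) (7 * lam * R₁),
            μhi / 10 < r ^ (n + 1) / a - (r ^ (n + 1) + ((n + 1 : ℝ) / n) * m - A₁ r / r)) := by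
  have hμhi : 0 < μhi := lt_of_lt_of_le hμlo hle
  have hn2 : (2 : ℝ) ≤ (n : ℝ) := by exact_mod_cast hn
  have hn0 : (0 : ℝ) < (n : ℝ) := by linarith
  have hK1 : (1 : ℝ) ≤ ((n : ℝ) + 1) / n := by
    rw [le_div_iff₀ hn0]; linarith
  have hKpos : (0 : ℝ) < ((n : ℝ) + 1) / n := lt_of_lt_of_le one_pos hK1
  have hlam1 : (1 : ℝ) ≤ lam := by
    rw [hlam]
    exact Real.one_le_rpow (by rw [le_div_iff₀ hμlo]; linarith) (by positivity)
  have hlam0 : (0 : ℝ) < lam := lt_of_lt_of_le one_pos hlam1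
  have hs34 : Real.sqrt (3 / 4) ≤ 0.87 := by
    rw [show (0.87 : ℝ) = Real.sqrt (0.87 ^ 2) from (Real.sqrt_sq (by norm_num)).symm]
    exact Real.sqrt_le_sqrt (by norm_num)
  have hs43 : (1.15 : ℝ) ≤ Real.sqrt (4 / 3) := by
    rw [show (1.15 : ℝ) = Real.sqrt (1.15 ^ 2) from (Real.sqrt_sq (by norm_num)).symm]
    exact Real.sqrt_le_sqrt (by norm_num)
  have hs43pos : (0 : ℝ) < Real.sqrt (4 / 3) := by linarith
  have hs34pos : (0 : ℝ) < Real.sqrt (3 / 4) := Real.sqrt_pos.2 (by norm_num)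
  set Q : ℝ := (4 * lam) ^ (n + 1) with hQ
  have hQpos : 0 < Q := pow_pos (by linarith) _
  set R₁ : ℝ := max (40 * C / μlo) (C * Q / μhi) with hRdef
  have hR1pos : 0 < R₁ :=
    lt_max_of_lt_left (by positivity)
  have hR40 : 40 * C / μlo ≤ R₁ := le_max_left _ _
  have hRC : C * Q / μhi ≤ R₁ := le_max_right _ _
  clear_value Q R₁
  clear hRdef
  refine ⟨R₁, hR1pos, ?_⟩
  intro a ha ha1 hblo hbhi m hm1 hm2 A₁ hdiff hAb hAd
  set K : ℝ := ((n : ℝ) + 1) / n with hKdef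
  set b : ℝ := 1 / a - 1 with hbdef
  have hainv : 1 / a = b + 1 := by rw [hbdef]; ring
  clear_value b
  clear hbdef
  have hP4 : (0 : ℝ) < (4 * lam * R₁) ^ (n + 1) := by positivity
  have hP3 : (0 : ℝ) < (3 * lam * R₁) ^ (n + 1) := by positivity
  have hbpos : 0 < b :=
    lt_trans (div_pos (mul_pos (mul_pos hKpos hs43pos) hμhi) hP4) hblo
  have hb4 : K * Real.sqrt (4 / 3) * μhi < b * (4 * lam * R₁) ^ (n + 1) :=
    (div_lt_iff₀ hP4).1 hblo
  have hb3 : b * (3 * lam * R₁) ^ (n + 1) < K * Real.sqrt (3 / 4) * μlo :=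
    (lt_div_iff₀ hP3).1 hbhi
  -- key inequality for part (i)
  have hKs : (1 : ℝ) ≤ K * Real.sqrt (4 / 3) := by
    have := mul_le_mul hK1 hs43 (by norm_num) (le_trans zero_le_one hK1)
    linarith
  have h1 : μhi < b * (4 * lam * R₁) ^ (n + 1) := by
    have := mul_le_mul_of_nonneg_right hKs hμhi.le
    linarith
  have hbkey : C < b * R₁ ^ (n + 2) := by
    have h2 : μhi * R₁ < b * Q * R₁ ^ (n + 2) := by
      have h2' := mul_lt_mul_of_pos_right h1 hR1pos
      calc μhi * R₁ < b * (4 * lam * R₁) ^ (n + 1) * R₁ := h2'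
        _ = b * Q * R₁ ^ (n + 2) := by rw [hQ, mul_pow, pow_succ]; ring
    have h3 : C * Q ≤ R₁ * μhi := (div_le_iff₀ hμhi).1 hRC
    have h4 : C * Q < b * R₁ ^ (n + 2) * Q := by
      calc C * Q ≤ R₁ * μhi := h3
        _ = μhi * R₁ := by ring
        _ < b * Q * R₁ ^ (n + 2) := h2
        _ = b * R₁ ^ (n + 2) * Q := by ring
    exact lt_of_mul_lt_mul_right h4 hQpos.le
  have hmem7 : ∀ r : ℝ, r ∈ Set.Icc R₁ (3 * lam * R₁) → r ∈ Set.Icc R₁ (7 * lam * R₁) := by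
    rintro r ⟨h1', h2'⟩
    have := mul_pos hlam0 hR1pos
    exact ⟨h1', by linarith⟩
  have hmem4 : ∀ r : ℝ, r ∈ Set.Icc (4 * lam * R₁) (7 * lam * R₁) →
      r ∈ Set.Icc R₁ (7 * lam * R₁) := by
    rintro r ⟨h1', h2'⟩
    have := mul_nonneg (by linarith : (0:ℝ) ≤ lam - 1) hR1pos.le
    exact ⟨by linarith, h2'⟩
  refine ⟨?_, ?_, ?_⟩
  · -- part (i): derivative comparison
    rintro r ⟨hr1, hr2⟩
    have hr0 : 0 < r := lt_of_lt_of_le hR1pos hr1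
    have hrne : r ≠ 0 := ne_of_gt hr0
    have hgd : DifferentiableAt ℝ (fun s => A₁ s / s) r :=
      (hdiff r ⟨hr1, hr2⟩).div differentiableAt_fun_id hrne
    have hd1 : deriv (fun s : ℝ => s ^ (n + 1) + K * m - A₁ s / s) r
        = ((n : ℝ) + 1) * r ^ n - deriv (fun s => A₁ s / s) r := by
      have h := (((hasDerivAt_pow (n + 1) r).add_const (K * m)).sub
        hgd.hasDerivAt).deriv
      simpa [Pi.sub_def] using h
    have hd2 : deriv (fun s : ℝ => s ^ (n + 1) / a) r = ((n : ℝ) + 1) * r ^ n / a := by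
      have h := ((hasDerivAt_pow (n + 1) r).div_const a).deriv
      simpa using h
    rw [hd1, hd2, div_eq_mul_one_div, hainv]
    have hD := (hAd r ⟨hr1, hr2⟩).1
    rw [neg_div] at hD
    have hbr : C < b * (r ^ n * r ^ 2) := by
      have h5 : R₁ ^ (n + 2) ≤ r ^ (n + 2) := pow_le_pow_left₀ hR1pos.le hr1 _
      calc C < b * R₁ ^ (n + 2) := hbkey
        _ ≤ b * r ^ (n + 2) := mul_le_mul_of_nonneg_left h5 hbpos.le
        _ = b * (r ^ n * r ^ 2) := by rw [pow_add]
    have h6 : (1 : ℝ) ≤ (n : ℝ) * ((n : ℝ) + 1) := by nlinarith [hn2]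
    have hcr : C / ((n : ℝ) * r ^ 2) < ((n : ℝ) + 1) * r ^ n * b := by
      rw [div_lt_iff₀ (mul_pos hn0 (by positivity))]
      calc C < b * (r ^ n * r ^ 2) := hbr
        _ ≤ ((n : ℝ) * ((n : ℝ) + 1)) * (b * (r ^ n * r ^ 2)) :=
            le_mul_of_one_le_left (mul_nonneg hbpos.le (by positivity)) h6
        _ = ((n : ℝ) + 1) * r ^ n * b * ((n : ℝ) * r ^ 2) := by ring
    have h9 : -(deriv (fun s => A₁ s / s) r) < ((n : ℝ) + 1) * r ^ n * b :=
      lt_of_le_of_lt (by linarith) hcr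
    nlinarith [h9]
  · -- part (ii)
    rintro r ⟨hr1, hr2⟩
    have hr0 : 0 < r := lt_of_lt_of_le hR1pos hr1
    have hmem := hmem7 r ⟨hr1, hr2⟩
    obtain ⟨hA0, hAC⟩ := hAb r hmem
    have hAr : A₁ r / r ≤ μlo / 40 := by
      have h7 : A₁ r / r ≤ C / R₁ := div_le_div₀ hC.le hAC hR1pos hr1
      have h8 : C / R₁ ≤ μlo / 40 := by
        rw [div_le_div_iff₀ hR1pos (by norm_num)]
        have := (div_le_iff₀ hμlo).1 hR40
        linarith
      linarith
    have hbr : b * r ^ (n + 1) < K * Real.sqrt (3 / 4) * μlo := by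
      have h5 : r ^ (n + 1) ≤ (3 * lam * R₁) ^ (n + 1) := pow_le_pow_left₀ hr0.le hr2 _
      calc b * r ^ (n + 1) ≤ b * (3 * lam * R₁) ^ (n + 1) :=
            mul_le_mul_of_nonneg_left h5 hbpos.le
        _ < K * Real.sqrt (3 / 4) * μlo := hb3
    have hra : r ^ (n + 1) / a = r ^ (n + 1) * (b + 1) := by
      rw [div_eq_mul_one_div, hainv]
    rw [hra]
    have hKm : K * μlo ≤ K * m := mul_le_mul_of_nonneg_left hm1 hKpos.le
    have h87 : K * Real.sqrt (3 / 4) * μlo ≤ K * 0.87 * μlo :=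
      mul_le_mul_of_nonneg_right (mul_le_mul_of_nonneg_left hs34 hKpos.le) hμlo.le
    have hX : μlo ≤ K * μlo := by
      have := mul_le_mul_of_nonneg_right hK1 hμlo.le
      linarith
    linarith [hKm, h87, hX, hAr, hbr, hμlo]
  · -- part (iii)
    rintro r ⟨hr1, hr2⟩
    have hmem := hmem4 r ⟨hr1, hr2⟩
    have hr0 : 0 < r := lt_of_lt_of_le hR1pos hmem.1
    obtain ⟨hA0, hAC⟩ := hAb r hmem
    have hAr : 0 ≤ A₁ r / r := div_nonneg hA0 hr0.le
    have hbr : K * Real.sqrt (4 / 3) * μhi < b * r ^ (n + 1) := by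
      have h5 : (4 * lam * R₁) ^ (n + 1) ≤ r ^ (n + 1) :=
        pow_le_pow_left₀ (by positivity) hr1 _
      calc K * Real.sqrt (4 / 3) * μhi < b * (4 * lam * R₁) ^ (n + 1) := hb4
        _ ≤ b * r ^ (n + 1) := mul_le_mul_of_nonneg_left h5 hbpos.le
    have hra : r ^ (n + 1) / a = r ^ (n + 1) * (b + 1) := by
      rw [div_eq_mul_one_div, hainv]
    rw [hra]
    have hKm : K * m ≤ K * μhi := mul_le_mul_of_nonneg_left hm2 hKpos.le
    have h115 : K * 1.15 * μhi ≤ K * Real.sqrt (4 / 3) * μhi :=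
      mul_le_mul_of_nonneg_right (mul_le_mul_of_nonneg_left hs43 hKpos.le) hμhi.le
    have hX : μhi ≤ K * μhi := by
      have := mul_le_mul_of_nonneg_right hK1 hμhi.le
      linarith
    linarith [hKm, h115, hX, hAr, hbr, hμhi]
end
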